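/- Under the Spitzer–Doney condition, for every fixed i ∈ ℕ and every bounded continuous function f : ℝ³ → ℝ, and for n ≥ i: E[ f(μ'_{i,n}, S'_{i,n}, Σ_{j=0}^{n−1−τ_n} μ'_{j+1,n} e^{−S'_{j,n}}) ; τ_n + i ≤ n ] = Σ_{k=0}^{n−i} E[ f(μ_i, S_i, Σ_{j=0}^{n−1−k} μ_{j+1} e^{−S_j}) | L_{n−k} ≥ 0 ] · P(τ_n = k), where μ'_{j,n} = μ_{τ_n + j} and S'_{j,n} = S_{τ_n + j} − S_{τ_n}. -/

import Mathlib

open MeasureTheory ProbabilityTheory Filter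

namespace Stmt19Aux

variable {Ω : Type*} {m0 : MeasurableSpace Ω}

noncomputable def psum (m : ℕ) (y : Fin m → ℝ × ℝ) (j : ℕ) : ℝ :=
  ∑ l : Fin m, if (l : ℕ) < j then (y l).1 else 0

noncomputable def val2 (m i : ℕ) (y : Fin m → ℝ × ℝ) : ℝ :=
  ∑ l : Fin m, if (l : ℕ) = i - 1 then (y l).2 else 0

noncomputable def tot (m : ℕ) (y : Fin m → ℝ × ℝ) : ℝ :=
  ∑ l : Fin m, (y l).2 * Real.exp (-(psum m y l))

def Bset (m : ℕ) : Set (Fin m → ℝ × ℝ) := {y | ∀ j ≤ m, 0 ≤ psum m y j}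

def Aset (k : ℕ) : Set (Fin k → ℝ × ℝ) := {y | ∀ j < k, psum k y k < psum k y j}

lemma psum_meas (m j : ℕ) : Measurable fun y => psum m y j := by
  apply Finset.measurable_sum
  intro l _
  by_cases h : (l : ℕ) < j
  · simpa [h] using (measurable_pi_apply l).fst
  · simp only [h, if_false]
    exact measurable_const

lemma val2_meas (m i : ℕ) : Measurable (val2 m i) := by
  apply Finset.measurable_sum
  intro l _
  by_cases h : (l : ℕ) = i - 1
  · simpa [h] using (measurable_pi_apply l).snd
  · simp only [h, if_false]
    exact measurable_const

lemma tot_meas (m : ℕ) : Measurable (tot m) := by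
  apply Finset.measurable_sum
  intro l _
  exact (measurable_pi_apply l).snd.mul
    (((psum_meas m l).neg).exp)

lemma Bset_meas (m : ℕ) : MeasurableSet (Bset m) := by
  have : Bset m = ⋂ (j : ℕ), ⋂ (_ : j ≤ m), {y | 0 ≤ psum m y j} := by
    ext y; simp [Bset, Set.mem_iInter]
  rw [this]
  exact MeasurableSet.iInter fun j => MeasurableSet.iInter fun _ =>
    measurableSet_le measurable_const (psum_meas m j)

lemma Aset_meas (k : ℕ) : MeasurableSet (Aset k) := by
  have : Aset k = ⋂ (j : ℕ), ⋂ (_ : j < k), {y | psum k y k < psum k y j} := by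
    ext y; simp [Aset, Set.mem_iInter]
  rw [this]
  exact MeasurableSet.iInter fun j => MeasurableSet.iInter fun _ =>
    measurableSet_lt (psum_meas k k) (psum_meas k j)

lemma blockLaw (P : Measure Ω) [IsProbabilityMeasure P] (Y : ℕ → Ω → ℝ × ℝ)
    (hY : ∀ l, Measurable (Y l))
    (hind : iIndepFun Y P)
    (hid : ∀ l, Measure.map (Y l) P = Measure.map (Y 0) P)
    (k m : ℕ) :
    Measure.map (fun ω (j : Fin m) => Y (k + (j : ℕ)) ω) P
      = Measure.pi (fun _ : Fin m => Measure.map (Y 0) P) := by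
  classical
  haveI : IsProbabilityMeasure (Measure.map (Y 0) P) :=
    Measure.isProbabilityMeasure_map (hY 0).aemeasurable
  refine (Measure.pi_eq fun s hs => ?_).symm
  have hBl : Measurable fun ω (j : Fin m) => Y (k + (j : ℕ)) ω :=
    measurable_pi_lambda _ fun j => hY _
  rw [Measure.map_apply hBl (MeasurableSet.univ_pi hs)]
  set sets : ℕ → Set (ℝ × ℝ) := fun l => ⋂ (j : Fin m) (_ : l = k + (j : ℕ)), s j
    with hsets_def
  have hsets : ∀ j : Fin m, sets (k + (j : ℕ)) = s j := by
    intro j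
    ext x
    simp only [hsets_def, Set.mem_iInter]
    constructor
    · intro h; exact h j rfl
    · intro hx j' hj'
      have : j' = j := Fin.ext (by omega)
      rw [this]; exact hx
  have hsets_meas : ∀ l, MeasurableSet (sets l) :=
    fun l => MeasurableSet.iInter fun j => MeasurableSet.iInter fun _ => hs j
  have hmarg : ∀ l (t : Set (ℝ × ℝ)), MeasurableSet t →
      P (Y l ⁻¹' t) = Measure.map (Y 0) P t := by
    intro l t ht
    rw [← hid l, Measure.map_apply (hY l) ht]
  have hpre : (fun ω (j : Fin m) => Y (k + (j : ℕ)) ω) ⁻¹' Set.univ.pi s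
      = ⋂ l ∈ (Finset.range m).image (fun j => k + j), Y l ⁻¹' sets l := by
    ext ω
    simp only [Set.mem_preimage, Set.mem_pi, Set.mem_univ, forall_true_left, Set.mem_iInter,
      Finset.mem_image, Finset.mem_range]
    constructor
    · rintro h l ⟨j, hj, rfl⟩
      have := h ⟨j, hj⟩
      rw [show (k + j) = k + ((⟨j, hj⟩ : Fin m) : ℕ) from rfl, hsets ⟨j, hj⟩]
      exact this
    · intro h j
      have := h (k + (j : ℕ)) ⟨(j : ℕ), j.2, rfl⟩
      rwa [hsets j] at this
  rw [hpre, hind.measure_inter_preimage_eq_mul _ (fun l _ => hsets_meas l)]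
  rw [Finset.prod_image (by intro a _ b _ h; simp only at h; omega)]
  rw [← Fin.prod_univ_eq_prod_range (fun j => P (Y (k + j) ⁻¹' sets (k + j))) m]
  apply Finset.prod_congr rfl
  intro j _
  rw [hmarg _ _ (hsets_meas _), hsets j]

lemma indepBlocks (P : Measure Ω) [IsProbabilityMeasure P] (Y : ℕ → Ω → ℝ × ℝ)
    (hY : ∀ l, Measurable (Y l))
    (hind : iIndepFun Y P) (k m : ℕ) :
    IndepFun (fun ω (j : Fin k) => Y (j : ℕ) ω)
      (fun ω (j : Fin m) => Y (k + (j : ℕ)) ω) P := by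
  classical
  have hST : Disjoint (Finset.range k) ((Finset.range m).image fun j => k + j) := by
    simp only [Finset.disjoint_left, Finset.mem_range, Finset.mem_image]
    rintro a ha ⟨j, hj, rfl⟩
    omega
  have h := hind.indepFun_finset (Finset.range k) ((Finset.range m).image fun j => k + j) hST hY
  have hφ : Measurable fun (v : ((Finset.range k : Finset ℕ) : Type) → ℝ × ℝ) (j : Fin k) =>
      v ⟨(j : ℕ), Finset.mem_range.mpr j.2⟩ :=
    measurable_pi_lambda _ fun j => measurable_pi_apply _
  have hψ : Measurable fun
      (v : (((Finset.range m).image (fun j => k + j) : Finset ℕ) : Type) → ℝ × ℝ)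
      (j : Fin m) =>
      v ⟨k + (j : ℕ), by
        simp only [Finset.mem_image, Finset.mem_range]
        exact ⟨(j : ℕ), j.2, rfl⟩⟩ :=
    measurable_pi_lambda _ fun j => measurable_pi_apply _
  exact h.comp hφ hψ

lemma key (P : Measure Ω) [IsProbabilityMeasure P] (Y : ℕ → Ω → ℝ × ℝ)
    (hY : ∀ l, Measurable (Y l))
    (hind : iIndepFun Y P)
    (hid : ∀ l, Measure.map (Y l) P = Measure.map (Y 0) P) (k m : ℕ)
    (A' : Set (Fin k → ℝ × ℝ)) (hA' : MeasurableSet A')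
    (G : (Fin m → ℝ × ℝ) → ℝ) (hG : Measurable G) :
    ∫ ω in {ω | (fun j : Fin k => Y (j : ℕ) ω) ∈ A'},
        G (fun j : Fin m => Y (k + (j : ℕ)) ω) ∂P
      = (P {ω | (fun j : Fin k => Y (j : ℕ) ω) ∈ A'}).toReal
          * ∫ ω, G (fun j : Fin m => Y (j : ℕ) ω) ∂P := by
  set U := fun ω (j : Fin k) => Y (j : ℕ) ω with hU_def
  set V := fun ω (j : Fin m) => Y (k + (j : ℕ)) ω with hV_def
  have hU : Measurable U := measurable_pi_lambda _ fun j => hY _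
  have hV : Measurable V := measurable_pi_lambda _ fun j => hY _
  have hsetA : MeasurableSet {ω | U ω ∈ A'} := hU hA'
  have hindUV := indepBlocks P Y hY hind k m
  have h1 : IndepFun ((A'.indicator (fun _ => (1:ℝ))) ∘ U) (G ∘ V) P :=
    hindUV.comp (measurable_const.indicator hA') hG
  have hint : ∫ ω in {ω | U ω ∈ A'}, G (V ω) ∂P
      = ∫ ω, (A'.indicator (fun _ => (1:ℝ)) (U ω)) * G (V ω) ∂P := by
    rw [← integral_indicator hsetA]
    congr 1
    ext ω
    by_cases h : U ω ∈ A' <;> simp [Set.indicator, h]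
  have h2 : ∫ ω, (A'.indicator (fun _ => (1:ℝ)) (U ω)) * G (V ω) ∂P
      = (∫ ω, A'.indicator (fun _ => (1:ℝ)) (U ω) ∂P) * ∫ ω, G (V ω) ∂P :=
    h1.integral_fun_mul_eq_mul_integral ((measurable_const.indicator hA').comp hU).aestronglyMeasurable
      (hG.comp hV).aestronglyMeasurable
  have h3 : ∫ ω, A'.indicator (fun _ => (1:ℝ)) (U ω) ∂P = (P {ω | U ω ∈ A'}).toReal := by
    have he : (fun ω => A'.indicator (fun _ => (1:ℝ)) (U ω))
        = Set.indicator {ω | U ω ∈ A'} (fun _ => (1:ℝ)) := by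
      ext ω; by_cases h : U ω ∈ A' <;> simp [Set.indicator, h]
    rw [he]
    exact integral_indicator_one hsetA
  have h4 : ∫ ω, G (V ω) ∂P = ∫ ω, G (fun j : Fin m => Y (j : ℕ) ω) ∂P := by
    have hV0 : Measurable fun ω (j : Fin m) => Y (0 + (j : ℕ)) ω :=
      measurable_pi_lambda _ fun j => hY _
    rw [hV_def]
    rw [← integral_map hV.aemeasurable hG.aestronglyMeasurable,
      blockLaw P Y hY hind hid k m, ← blockLaw P Y hY hind hid 0 m,
      integral_map hV0.aemeasurable hG.aestronglyMeasurable]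
    simp only [Nat.zero_add]
  rw [hint, h2, h3, h4]

lemma keyP (P : Measure Ω) [IsProbabilityMeasure P] (Y : ℕ → Ω → ℝ × ℝ)
    (hY : ∀ l, Measurable (Y l))
    (hind : iIndepFun Y P)
    (hid : ∀ l, Measure.map (Y l) P = Measure.map (Y 0) P) (k m : ℕ)
    (A' : Set (Fin k → ℝ × ℝ)) (hA' : MeasurableSet A')
    (B' : Set (Fin m → ℝ × ℝ)) (hB' : MeasurableSet B') :
    P ({ω | (fun j : Fin k => Y (j : ℕ) ω) ∈ A'}
        ∩ {ω | (fun j : Fin m => Y (k + (j : ℕ)) ω) ∈ B'})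
      = P {ω | (fun j : Fin k => Y (j : ℕ) ω) ∈ A'}
          * P {ω | (fun j : Fin m => Y (j : ℕ) ω) ∈ B'} := by
  have hindUV := indepBlocks P Y hY hind k m
  have hV : Measurable fun ω (j : Fin m) => Y (k + (j : ℕ)) ω :=
    measurable_pi_lambda _ fun j => hY _
  have hV0 : Measurable fun ω (j : Fin m) => Y (0 + (j : ℕ)) ω :=
    measurable_pi_lambda _ fun j => hY _
  have h := hindUV.measure_inter_preimage_eq_mul A' B' hA' hB'
  show P ((fun ω (j : Fin k) => Y (j : ℕ) ω) ⁻¹' A'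
      ∩ (fun ω (j : Fin m) => Y (k + (j : ℕ)) ω) ⁻¹' B')
    = P ((fun ω (j : Fin k) => Y (j : ℕ) ω) ⁻¹' A')
      * P ((fun ω (j : Fin m) => Y (j : ℕ) ω) ⁻¹' B')
  rw [h]
  congr 1
  rw [← Measure.map_apply hV hB', blockLaw P Y hY hind hid k m,
    ← blockLaw P Y hY hind hid 0 m, Measure.map_apply hV0 hB']
  simp only [Nat.zero_add]

end Stmt19Aux

open Stmt19Aux

theorem stmt19 {Ω : Type*} {m0 : MeasurableSpace Ω} (P : Measure Ω) [IsProbabilityMeasure P]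
    (X : ℕ → Ω → ℝ) (μ : ℕ → Ω → ℝ)
    (hXmeas : ∀ i, Measurable (X i)) (hμmeas : ∀ i, Measurable (μ i))
    (hμpos : ∀ i ω, 0 < μ i ω)
    (hindep : iIndepFun
      (fun i ω => (X (i+1) ω, μ (i+1) ω)) P)
    (hident : ∀ i, Measure.map (fun ω => (X (i+1) ω, μ (i+1) ω)) P
      = Measure.map (fun ω => (X 1 ω, μ 1 ω)) P)
    (S L : ℕ → Ω → ℝ) (τ : ℕ → Ω → ℕ)
    (hS : ∀ n ω, S n ω = ∑ j ∈ Finset.range n, X (j+1) ω)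
    (hL : ∀ n ω, L n ω = (Finset.range (n+1)).inf' Finset.nonempty_range_add_one
      (fun j => S j ω))
    (hτ : ∀ n ω, τ n ω = sInf {i | i ≤ n ∧ S i ω = L n ω})
    (ρ : ℝ) (hρ : ρ ∈ Set.Ioo (0:ℝ) 1)
    (hSD : Tendsto (fun n => (P {ω | 0 < S n ω}).toReal) atTop (nhds ρ))
    (hpos : ∀ m, 0 < P {ω | 0 ≤ L m ω})
    (i n : ℕ) (hi : 1 ≤ i) (hin : i ≤ n)
    (f : BoundedContinuousFunction (ℝ × ℝ × ℝ) ℝ) :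
    ∫ ω in {ω | τ n ω + i ≤ n},
        f (μ (τ n ω + i) ω, S (τ n ω + i) ω - S (τ n ω) ω,
          ∑ j ∈ Finset.range (n - τ n ω), μ (τ n ω + j + 1) ω
            * Real.exp (-(S (τ n ω + j) ω - S (τ n ω) ω))) ∂P
      = ∑ k ∈ Finset.range (n - i + 1),
          (∫ ω, f (μ i ω, S i ω,
              ∑ j ∈ Finset.range (n - k), μ (j+1) ω * Real.exp (-(S j ω)))
            ∂(P[|{ω | 0 ≤ L (n - k) ω}]))
          * (P {ω | τ n ω = k}).toReal := by
  classical
  set Yf : ℕ → Ω → ℝ × ℝ := fun l ω => (X (l+1) ω, μ (l+1) ω) with hYf_def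
  have hYmeas : ∀ l, Measurable (Yf l) := fun l => (hXmeas _).prodMk (hμmeas _)
  have hind : iIndepFun Yf P := hindep
  have hid : ∀ l, Measure.map (Yf l) P = Measure.map (Yf 0) P := fun l => hident l
  have hS0 : ∀ ω, S 0 ω = 0 := fun ω => by simp [hS]
  have hSdiff : ∀ k j ω, S (k + j) ω - S k ω = ∑ l ∈ Finset.range j, X (k + l + 1) ω := by
    intro k j ω
    induction j with
    | zero => simp
    | succ j ih =>
      have hstep : S (k + (j+1)) ω = S (k + j) ω + X (k + j + 1) ω := by
        rw [hS, hS, show k + (j+1) = (k+j) + 1 by ring, Finset.sum_range_succ]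
      rw [hstep, Finset.sum_range_succ, ← ih]; ring
  have hpsum : ∀ k mm j, j ≤ mm → ∀ ω,
      psum mm (fun l : Fin mm => Yf (k + (l:ℕ)) ω) j = S (k + j) ω - S k ω := by
    intro k mm j hj ω
    have h1 : psum mm (fun l : Fin mm => Yf (k + (l:ℕ)) ω) j
        = ∑ l ∈ Finset.range mm, if l < j then X (k + l + 1) ω else 0 :=
      Fin.sum_univ_eq_sum_range (fun t => if t < j then X (k + t + 1) ω else 0) mm
    have h2 : (Finset.range mm).filter (fun l => l < j) = Finset.range j := by
      ext a; simp only [Finset.mem_filter, Finset.mem_range]; omega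
    rw [h1, ← Finset.sum_filter, h2, ← hSdiff]
  have hzero : ∀ mm ω,
      (fun l : Fin mm => Yf (0 + (l:ℕ)) ω) = (fun l : Fin mm => Yf (l:ℕ) ω) := by
    intro mm ω; funext l; rw [Nat.zero_add]
  have hpsum0 : ∀ mm j, j ≤ mm → ∀ ω,
      psum mm (fun l : Fin mm => Yf (l:ℕ) ω) j = S j ω := by
    intro mm j hj ω
    rw [← hzero mm ω, hpsum 0 mm j hj ω, Nat.zero_add, hS0]; ring
  have hval2 : ∀ k mm, i ≤ mm → ∀ ω,
      val2 mm i (fun l : Fin mm => Yf (k + (l:ℕ)) ω) = μ (k + i) ω := by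
    intro k mm him ω
    have hlt : i - 1 < mm := by omega
    unfold Stmt19Aux.val2
    rw [Finset.sum_eq_single (⟨i-1, hlt⟩ : Fin mm)]
    · rw [if_pos rfl]
      show μ (k + (i-1) + 1) ω = μ (k + i) ω
      congr 1; omega
    · intro b _ hb
      rw [if_neg]
      intro hbb
      exact hb (Fin.ext hbb)
    · intro h; exact absurd (Finset.mem_univ _) h
  have htot : ∀ k mm ω, tot mm (fun l : Fin mm => Yf (k + (l:ℕ)) ω)
      = ∑ j ∈ Finset.range mm, μ (k + j + 1) ω * Real.exp (-(S (k + j) ω - S k ω)) := by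
    intro k mm ω
    refine (Fin.sum_univ_eq_sum_range (fun t => (Yf (k + t) ω).2
      * Real.exp (-(psum mm (fun l : Fin mm => Yf (k + (l:ℕ)) ω) t))) mm).trans ?_
    refine Finset.sum_congr rfl fun j hj => ?_
    rw [hpsum k mm j (le_of_lt (Finset.mem_range.mp hj)) ω]
  have hval20 : ∀ mm, i ≤ mm → ∀ ω,
      val2 mm i (fun l : Fin mm => Yf (l:ℕ) ω) = μ i ω := by
    intro mm him ω
    rw [← hzero mm ω, hval2 0 mm him ω, Nat.zero_add]
  have htot0 : ∀ mm ω, tot mm (fun l : Fin mm => Yf (l:ℕ) ω)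
      = ∑ j ∈ Finset.range mm, μ (j + 1) ω * Real.exp (-(S j ω)) := by
    intro mm ω
    rw [← hzero mm ω, htot 0 mm ω]
    refine Finset.sum_congr rfl fun j hj => ?_
    simp only [Nat.zero_add, hS0, sub_zero]
  have hBiff : ∀ k mm ω, ((fun l : Fin mm => Yf (k + (l:ℕ)) ω) ∈ Bset mm)
      ↔ ∀ j ≤ mm, 0 ≤ S (k + j) ω - S k ω := by
    intro k mm ω
    unfold Stmt19Aux.Bset
    simp only [Set.mem_setOf_eq]
    exact forall_congr' fun j => imp_congr_right fun hj => by rw [hpsum k mm j hj ω]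
  have hBiff0 : ∀ mm ω, ((fun l : Fin mm => Yf (l:ℕ) ω) ∈ Bset mm)
      ↔ ∀ j ≤ mm, 0 ≤ S j ω := by
    intro mm ω
    rw [← hzero mm ω, hBiff 0 mm ω]
    refine forall_congr' fun j => imp_congr_right fun hj => ?_
    rw [Nat.zero_add, hS0, sub_zero]
  have hAiff : ∀ k ω, ((fun l : Fin k => Yf (l:ℕ) ω) ∈ Aset k)
      ↔ ∀ j < k, S k ω < S j ω := by
    intro k ω
    unfold Stmt19Aux.Aset
    simp only [Set.mem_setOf_eq]
    exact forall_congr' fun j => imp_congr_right fun hj =>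
      by rw [hpsum0 k k le_rfl ω, hpsum0 k j hj.le ω]
  have hLiff : ∀ mm ω, 0 ≤ L mm ω ↔ ∀ j ≤ mm, 0 ≤ S j ω := by
    intro mm ω
    rw [hL, Finset.le_inf'_iff]
    constructor
    · intro h j hj; exact h j (Finset.mem_range.mpr (by omega))
    · intro h j hj; exact h j (Nat.lt_succ_iff.mp (Finset.mem_range.mp hj))
  have hLle : ∀ ω j, j ≤ n → L n ω ≤ S j ω := by
    intro ω j hj
    rw [hL]
    exact Finset.inf'_le _ (Finset.mem_range.mpr (by omega))
  have hLex : ∀ ω, ∃ j, j ≤ n ∧ S j ω = L n ω := by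
    intro ω
    obtain ⟨b, hb, hbe⟩ :=
      Finset.exists_mem_eq_inf' (Finset.nonempty_range_add_one) (fun j => S j ω)
    refine ⟨b, Nat.lt_succ_iff.mp (Finset.mem_range.mp hb), ?_⟩
    rw [hL]; exact hbe.symm
  have hτchar : ∀ k, k ≤ n → ∀ ω, (τ n ω = k ↔
      ((∀ j < k, S k ω < S j ω) ∧ ∀ j ≤ n - k, 0 ≤ S (k + j) ω - S k ω)) := by
    intro k hk ω
    rw [hτ]
    have hTne : {l | l ≤ n ∧ S l ω = L n ω}.Nonempty := by
      obtain ⟨j, hj1, hj2⟩ := hLex ω; exact ⟨j, hj1, hj2⟩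
    constructor
    · intro hke
      have hkT : k ∈ {l | l ≤ n ∧ S l ω = L n ω} := hke ▸ Nat.sInf_mem hTne
      have hmin : ∀ j, j < k → j ∉ {l | l ≤ n ∧ S l ω = L n ω} := by
        intro j hj
        refine Nat.notMem_of_lt_sInf ?_
        rw [hke]; exact hj
      obtain ⟨hkn, hkL⟩ := hkT
      constructor
      · intro j hj
        have h1 : L n ω ≤ S j ω := hLle ω j (by omega)
        have h2 : S j ω ≠ L n ω := fun h => hmin j hj ⟨by omega, h⟩
        rw [hkL]
        exact lt_of_le_of_ne h1 (Ne.symm h2)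
      · intro j hj
        have h1 : L n ω ≤ S (k + j) ω := hLle ω (k+j) (by omega)
        rw [← hkL] at h1
        linarith
    · rintro ⟨hA, hB⟩
      have hkmin : ∀ j, j ≤ n → S k ω ≤ S j ω := by
        intro j hj
        rcases lt_or_ge j k with h | h
        · exact (hA j h).le
        · have h2 := hB (j - k) (by omega)
          have hjk : k + (j - k) = j := by omega
          rw [hjk] at h2
          linarith
      have hkL : S k ω = L n ω := by
        obtain ⟨j0, hj0, hj0e⟩ := hLex ω
        have h1 : L n ω ≤ S k ω := hLle ω k hk
        have h2 : S k ω ≤ S j0 ω := hkmin j0 hj0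
        linarith
      refine le_antisymm (Nat.sInf_le ⟨hk, hkL⟩) ?_
      by_contra hcon
      push_neg at hcon
      have hmem := Nat.sInf_mem hTne
      have h3 := hA _ hcon
      rw [hmem.2, ← hkL] at h3
      exact lt_irrefl _ h3
  have hτset : ∀ k, k ≤ n → {ω | τ n ω = k}
      = {ω | (fun l : Fin k => Yf (l:ℕ) ω) ∈ Aset k}
        ∩ {ω | (fun l : Fin (n-k) => Yf (k + (l:ℕ)) ω) ∈ Bset (n-k)} := by
    intro k hk
    ext ω
    simp only [Set.mem_setOf_eq, Set.mem_inter_iff]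
    rw [hτchar k hk ω, hAiff k ω, hBiff k (n-k) ω]
  have hmeasA : ∀ k, MeasurableSet {ω | (fun l : Fin k => Yf (l:ℕ) ω) ∈ Aset k} :=
    fun k => (measurable_pi_lambda _ fun l => hYmeas _) (Aset_meas k)
  have hmeasB : ∀ k mm,
      MeasurableSet {ω | (fun l : Fin mm => Yf (k + (l:ℕ)) ω) ∈ Bset mm} :=
    fun k mm => (measurable_pi_lambda _ fun l => hYmeas _) (Bset_meas mm)
  have hτmeas : ∀ k, k ≤ n → MeasurableSet {ω | τ n ω = k} := by
    intro k hk; rw [hτset k hk]; exact (hmeasA k).inter (hmeasB k (n-k))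
  -- the per-block bounded function
  set G : ∀ k : ℕ, (Fin (n-k) → ℝ × ℝ) → ℝ := fun k =>
    (Bset (n-k)).indicator
      (fun y => f (val2 (n-k) i y, psum (n-k) y i, tot (n-k) y)) with hG_def
  have hGmeas : ∀ k, Measurable (G k) := by
    intro k
    exact Measurable.indicator
      (f.continuous.measurable.comp ((val2_meas _ i).prodMk
        (((psum_meas _ i)).prodMk (tot_meas _)))) (Bset_meas _)
  have hGbound : ∀ k y, ‖G k y‖ ≤ ‖f‖ := by
    intro k y
    by_cases h : y ∈ Bset (n-k)
    · rw [hG_def]; simp only [Set.indicator_of_mem h]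
      exact f.norm_coe_le_norm _
    · rw [hG_def]; simp only [Set.indicator_of_notMem h, norm_zero]
      exact norm_nonneg f
  have hGint : ∀ k, Integrable (fun ω => G k (fun l : Fin (n-k) => Yf (k + (l:ℕ)) ω)) P := by
    intro k
    refine (integrable_const ‖f‖).mono'
      (((hGmeas k).comp (measurable_pi_lambda _ fun l => hYmeas _)).aestronglyMeasurable) ?_
    exact ae_of_all _ fun ω => hGbound k _
  have hFeq : ∀ k, k ≤ n - i → Set.EqOn
      (fun ω => G k (fun l : Fin (n-k) => Yf (k + (l:ℕ)) ω))
      (fun ω => f (μ (τ n ω + i) ω, S (τ n ω + i) ω - S (τ n ω) ω,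
          ∑ j ∈ Finset.range (n - τ n ω), μ (τ n ω + j + 1) ω
            * Real.exp (-(S (τ n ω + j) ω - S (τ n ω) ω))))
      {ω | τ n ω = k} := by
    intro k hk ω hω
    have hωk : τ n ω = k := hω
    have hmemB : (fun l : Fin (n-k) => Yf (k + (l:ℕ)) ω) ∈ Bset (n-k) := by
      have h := hω
      rw [hτset k (by omega)] at h
      exact h.2
    simp only [hωk]
    rw [hG_def]
    simp only [Set.indicator_of_mem hmemB]
    rw [hval2 k (n-k) (by omega) ω, hpsum k (n-k) i (by omega) ω, htot k (n-k) ω]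
  have hIntOn : ∀ k, k ≤ n - i → IntegrableOn
      (fun ω => f (μ (τ n ω + i) ω, S (τ n ω + i) ω - S (τ n ω) ω,
          ∑ j ∈ Finset.range (n - τ n ω), μ (τ n ω + j + 1) ω
            * Real.exp (-(S (τ n ω + j) ω - S (τ n ω) ω))))
      {ω | τ n ω = k} P := by
    intro k hk
    exact ((hGint k).integrableOn).congr_fun (hFeq k hk) (hτmeas k (by omega))
  have hunion : {ω | τ n ω + i ≤ n} = ⋃ k ∈ Finset.range (n - i + 1), {ω | τ n ω = k} := by
    ext ω
    simp only [Set.mem_setOf_eq, Set.mem_iUnion, Finset.mem_range]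
    constructor
    · intro h; exact ⟨τ n ω, by omega, rfl⟩
    · rintro ⟨k, hk, hke⟩; omega
  rw [hunion, integral_biUnion_finset _
    (fun k hk => hτmeas k (by simp only [Finset.mem_range] at hk; omega))
    (by
      intro a _ b _ hab
      simp only [Function.onFun, Set.disjoint_left]
      intro ω h1 h2
      simp only [Set.mem_setOf_eq] at h1 h2
      exact hab (by omega)
      )
    (fun k hk => hIntOn k (by simp only [Finset.mem_range] at hk; omega))]
  refine Finset.sum_congr rfl fun k hkmem => ?_
  have hk : k ≤ n - i := by simp only [Finset.mem_range] at hkmem; omega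
  have hkn : k ≤ n := by omega
  have him : i ≤ n - k := by omega
  -- left side
  have step1 : ∫ ω in {ω | τ n ω = k},
      f (μ (τ n ω + i) ω, S (τ n ω + i) ω - S (τ n ω) ω,
        ∑ j ∈ Finset.range (n - τ n ω), μ (τ n ω + j + 1) ω
          * Real.exp (-(S (τ n ω + j) ω - S (τ n ω) ω))) ∂P
      = ∫ ω in {ω | τ n ω = k}, G k (fun l : Fin (n-k) => Yf (k + (l:ℕ)) ω) ∂P :=
    setIntegral_congr_fun (hτmeas k hkn) (hFeq k hk) |>.symm
  have step2 : ∫ ω in {ω | τ n ω = k}, G k (fun l : Fin (n-k) => Yf (k + (l:ℕ)) ω) ∂P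
      = ∫ ω in {ω | (fun l : Fin k => Yf (l:ℕ) ω) ∈ Aset k},
          G k (fun l : Fin (n-k) => Yf (k + (l:ℕ)) ω) ∂P := by
    rw [hτset k hkn]
    rw [← integral_indicator ((hmeasA k).inter (hmeasB k (n-k))),
      ← integral_indicator (hmeasA k)]
    congr 1
    ext ω
    by_cases hA : ω ∈ {ω | (fun l : Fin k => Yf (l:ℕ) ω) ∈ Aset k}
    · by_cases hB : ω ∈ {ω | (fun l : Fin (n-k) => Yf (k + (l:ℕ)) ω) ∈ Bset (n-k)}
      · rw [Set.indicator_of_mem (Set.mem_inter hA hB), Set.indicator_of_mem hA]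
      · have hB' : (fun l : Fin (n-k) => Yf (k + (l:ℕ)) ω) ∉ Bset (n-k) := hB
        have hz : G k (fun l : Fin (n-k) => Yf (k + (l:ℕ)) ω) = 0 :=
          Set.indicator_of_notMem hB' _
        have hnc : ω ∉ ({ω | (fun l : Fin k => Yf (l:ℕ) ω) ∈ Aset k}
            ∩ {ω | (fun l : Fin (n-k) => Yf (k + (l:ℕ)) ω) ∈ Bset (n-k)}) :=
          fun hc => hB hc.2
        rw [Set.indicator_of_notMem hnc, Set.indicator_of_mem hA, hz]
    · have hnc : ω ∉ ({ω | (fun l : Fin k => Yf (l:ℕ) ω) ∈ Aset k}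
          ∩ {ω | (fun l : Fin (n-k) => Yf (k + (l:ℕ)) ω) ∈ Bset (n-k)}) :=
        fun hc => hA hc.1
      rw [Set.indicator_of_notMem hnc, Set.indicator_of_notMem hA]
  have step3 := key P Yf hYmeas hind hid k (n-k) (Aset k) (Aset_meas k) (G k) (hGmeas k)
  -- right side: the conditioned integral
  set s : Set Ω := {ω | 0 ≤ L (n - k) ω} with hs_def
  have hsmeas : MeasurableSet s := by
    have : s = {ω | (fun l : Fin (n-k) => Yf (l:ℕ) ω) ∈ Bset (n-k)} := by
      ext ω
      simp only [hs_def, Set.mem_setOf_eq]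
      rw [hLiff, hBiff0]
    rw [this]
    exact (measurable_pi_lambda _ fun l => hYmeas _) (Bset_meas _)
  have hseq : s = {ω | (fun l : Fin (n-k) => Yf (l:ℕ) ω) ∈ Bset (n-k)} := by
    ext ω
    simp only [hs_def, Set.mem_setOf_eq]
    rw [hLiff, hBiff0]
  have hScond : ∫ ω in s, f (μ i ω, S i ω,
      ∑ j ∈ Finset.range (n - k), μ (j+1) ω * Real.exp (-(S j ω))) ∂P
      = ∫ ω, G k (fun l : Fin (n-k) => Yf (l:ℕ) ω) ∂P := by
    rw [← integral_indicator hsmeas]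
    congr 1
    ext ω
    by_cases hω : ω ∈ s
    · have hmem : (fun l : Fin (n-k) => Yf (l:ℕ) ω) ∈ Bset (n-k) := by
        rw [hseq] at hω; exact hω
      rw [Set.indicator_of_mem hω, hG_def]
      simp only [Set.indicator_of_mem hmem]
      rw [hval20 (n-k) him ω, hpsum0 (n-k) i him ω, htot0 (n-k) ω]
    · have hmem : (fun l : Fin (n-k) => Yf (l:ℕ) ω) ∉ Bset (n-k) := by
        rw [hseq] at hω; exact hω
      rw [Set.indicator_of_notMem hω, hG_def]
      simp only [Set.indicator_of_notMem hmem]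
  have hPτ : P {ω | τ n ω = k}
      = P {ω | (fun l : Fin k => Yf (l:ℕ) ω) ∈ Aset k} * P s := by
    rw [hτset k hkn, keyP P Yf hYmeas hind hid k (n-k) (Aset k) (Aset_meas k)
      (Bset (n-k)) (Bset_meas (n-k)), hseq]
  have hcondint : ∫ ω, f (μ i ω, S i ω,
      ∑ j ∈ Finset.range (n - k), μ (j+1) ω * Real.exp (-(S j ω))) ∂(P[|s])
      = (P s).toReal⁻¹ * ∫ ω, G k (fun l : Fin (n-k) => Yf (l:ℕ) ω) ∂P := by
    rw [← hScond]
    rw [ProbabilityTheory.cond, integral_smul_measure, ENNReal.toReal_inv, smul_eq_mul]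
  have hsne : (P s).toReal ≠ 0 :=
    ENNReal.toReal_ne_zero.mpr ⟨(hpos (n-k)).ne', measure_ne_top P s⟩
  rw [step1, step2, step3, hcondint, hPτ, ENNReal.toReal_mul]
  field_simp
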